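/- Fix r ≥ 1 and q ≥ 1. Let W be a finite index type, and for each w ∈ W let Π_w be a nonempty finite type with an injective cost map λ_w : Π_w → ℝ^r. Let Δ_r = {p ∈ ℝ^r : p ≥ 0 and Σ_{h=1}^r p_h = 1}, and let N = {p ∈ Δ_r : ∃ w ∈ W with at least two distinct minimizers of σ ↦ ⟨p, λ_w(σ)⟩ over Π_w}. Then: (i) the set N has zero (r−1)-dimensional Hausdorff measure in ℝ^r; and (ii) for every family p̄ : Fin q → ℝ^r with p̄(ℓ) ∈ Δ_r \ N for all ℓ ∈ Fin q, there exists δ > 0 such that for every p : Fin q → ℝ^r with ‖p(ℓ) − p̄(ℓ)‖ < δ for all ℓ, and for every w ∈ W and ℓ ∈ Fin q, the set of minimizers of σ ↦ ⟨p(ℓ), λ_w(σ)⟩ over Π_w equals the set of minimizers of σ ↦ ⟨p̄(ℓ), λ_w(σ)⟩ over Π_w. -/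

import Mathlib

open scoped BigOperators RealInnerProductSpace
open MeasureTheory

/-- The unit simplex `Δ_r` in `ℝ^r`. -/
def unitSimplex (r : ℕ) : Set (EuclideanSpace ℝ (Fin r)) :=
  {p | (∀ h, 0 ≤ p h) ∧ ∑ h, p h = 1}

/-- The set of weight vectors in `Δ_r` at which, for some origin–destination
pair `w`, the shortest path is not unique. -/
def nonUniqueSet (r : ℕ) (W : Type*) [Fintype W]
    (Paths : W → Type*) [∀ w, Fintype (Paths w)] [∀ w, Nonempty (Paths w)]
    (lam : ∀ w, Paths w → EuclideanSpace ℝ (Fin r)) :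
    Set (EuclideanSpace ℝ (Fin r)) :=
  {p ∈ unitSimplex r | ∃ w : W, ∃ π π' : Paths w, π ≠ π' ∧
    (∀ σ : Paths w, ⟪p, lam w π⟫ ≤ ⟪p, lam w σ⟫) ∧
    (∀ σ : Paths w, ⟪p, lam w π'⟫ ≤ ⟪p, lam w σ⟫)}

section Aux

open Set Module
open scoped NNReal ENNReal

private lemma null_aux {r : ℕ} (hr : 1 ≤ r) (v : EuclideanSpace ℝ (Fin r)) (hv : v ≠ 0) :
    μH[(r : ℝ) - 1] {p : EuclideanSpace ℝ (Fin r) | ⟪p, v⟫ = 0 ∧ ∑ h, p h = 1} = 0 := by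
  have hcast : (r : ℝ) - 1 = (((r - 1 : ℕ) : ℝ≥0) : ℝ) := by
    rw [NNReal.coe_natCast, Nat.cast_sub hr, Nat.cast_one]
  set T : Set (EuclideanSpace ℝ (Fin r)) :=
    {p : EuclideanSpace ℝ (Fin r) | ⟪p, v⟫ = 0 ∧ ∑ h, p h = 1} with hT
  set ones : EuclideanSpace ℝ (Fin r) := WithLp.toLp 2 (fun _ => (1 : ℝ)) with hones
  have hip : ∀ p : EuclideanSpace ℝ (Fin r), ⟪ones, p⟫ = ∑ h, p h := by
    intro p
    simp [hones, PiLp.inner_apply, RCLike.inner_apply]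
  by_cases hA : ∃ a : ℝ, a • v = ones
  · obtain ⟨a, ha⟩ := hA
    have hTe : T = ∅ := by
      ext p
      simp only [mem_empty_iff_false, iff_false, hT, mem_setOf_eq, not_and]
      intro h1 h2
      have : (1 : ℝ) = 0 := by
        calc (1:ℝ) = ⟪ones, p⟫ := by rw [hip p, h2]
        _ = a * ⟪v, p⟫ := by rw [← ha, real_inner_smul_left]
        _ = a * ⟪p, v⟫ := by rw [real_inner_comm]
        _ = 0 := by rw [h1, mul_zero]
      norm_num at this
    rw [hTe]; simp
  · push_neg at hA
    have hli : LinearIndependent ℝ ![ones, v] := by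
      rw [linearIndependent_fin2]
      constructor
      · simpa using hv
      · simpa using hA
    have hr2 : 2 ≤ r := by
      have h := hli.fintype_card_le_finrank
      rw [finrank_euclideanSpace_fin] at h
      simpa using h
    set S : Submodule ℝ (EuclideanSpace ℝ (Fin r)) :=
      Submodule.span ℝ (Set.range ![ones, v]) with hSdef
    have hSrank : finrank ℝ S = 2 := by
      rw [hSdef, finrank_span_eq_card hli]; simp
    have hKrank : finrank ℝ Sᗮ = r - 2 := by
      have h := S.finrank_add_finrank_orthogonal
      rw [hSrank, finrank_euclideanSpace_fin] at h
      omega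
    rcases T.eq_empty_or_nonempty with hTe | ⟨p₀, hp₀⟩
    · rw [hTe]; simp
    · have hsub : T ⊆ (fun x => p₀ + x) '' (Sᗮ : Set (EuclideanSpace ℝ (Fin r))) := by
        intro p hp
        refine ⟨p - p₀, ?_, add_sub_cancel p₀ p⟩
        rw [SetLike.mem_coe, Submodule.mem_orthogonal]
        intro u hu
        induction hu using Submodule.span_induction with
        | mem x hx =>
          rcases hx with ⟨i, rfl⟩
          rw [inner_sub_right]
          fin_cases i
          · show ⟪ones, p⟫ - ⟪ones, p₀⟫ = 0
            rw [hip, hip, hp.2, hp₀.2, sub_self]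
          · show ⟪v, p⟫ - ⟪v, p₀⟫ = 0
            have e1 : ⟪v, p⟫ = 0 := by rw [real_inner_comm]; exact hp.1
            have e2 : ⟪v, p₀⟫ = 0 := by rw [real_inner_comm]; exact hp₀.1
            rw [e1, e2, sub_self]
        | zero => simp
        | add x y _ _ hx hy => rw [inner_add_left, hx, hy, add_zero]
        | smul a x _ hx => rw [real_inner_smul_left, hx, mul_zero]
      have hdim : dimH T ≤ ((r - 2 : ℕ) : ℝ≥0∞) := by
        have h1 : dimH T ≤ dimH ((fun x => p₀ + x) '' (Sᗮ : Set (EuclideanSpace ℝ (Fin r)))) :=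
          dimH_mono hsub
        have hiso : Isometry (fun x : EuclideanSpace ℝ (Fin r) => p₀ + x) :=
          Isometry.of_dist_eq fun x y => dist_add_left p₀ x y
        have h2 : dimH ((fun x => p₀ + x) '' (Sᗮ : Set (EuclideanSpace ℝ (Fin r)))) ≤
            dimH (Sᗮ : Set (EuclideanSpace ℝ (Fin r))) :=
          hiso.lipschitz.dimH_image_le _
        have h3 : dimH (Sᗮ : Set (EuclideanSpace ℝ (Fin r))) ≤ ((r - 2 : ℕ) : ℝ≥0∞) := by
          have he : (Sᗮ : Set (EuclideanSpace ℝ (Fin r))) =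
              Set.range ((↑) : Sᗮ → EuclideanSpace ℝ (Fin r)) := Subtype.range_coe.symm
          rw [he]
          have h4 : dimH (Set.range ((↑) : Sᗮ → EuclideanSpace ℝ (Fin r))) ≤
              dimH (univ : Set Sᗮ) := (isometry_subtype_coe.lipschitz).dimH_range_le
          rwa [Real.dimH_univ_eq_finrank, hKrank] at h4
        exact h1.trans (h2.trans h3)
      rw [hcast]
      refine hausdorffMeasure_of_dimH_lt (lt_of_le_of_lt hdim ?_)
      exact_mod_cast Nat.sub_lt_sub_left (by omega) (by omega)

end Aux

/-- Proposition 3: (i) under Assumption 1, the set `N` of weight vectors with a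
non-unique shortest path is null for the `(r−1)`-dimensional Hausdorff measure;
(ii) around any family `p̄ : Fin q → Δ_r \ N`, there is `δ > 0` such that any
family `p` with `‖p(ℓ) − p̄(ℓ)‖ < δ` for all `ℓ` yields, for every `w` and `ℓ`,
exactly the same set of shortest paths as `p̄`. -/
theorem shortest_paths_locally_constant (r q : ℕ) (hr : 1 ≤ r) (hq : 1 ≤ q)
    (W : Type*) [Fintype W]
    (Paths : W → Type*) [∀ w, Fintype (Paths w)] [∀ w, Nonempty (Paths w)]
    (lam : ∀ w, Paths w → EuclideanSpace ℝ (Fin r))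
    (hlam : ∀ w, Function.Injective (lam w)) :
    μH[(r : ℝ) - 1] (nonUniqueSet r W Paths lam) = 0 ∧
    ∀ pbar : Fin q → EuclideanSpace ℝ (Fin r),
      (∀ ℓ : Fin q, pbar ℓ ∈ unitSimplex r \ nonUniqueSet r W Paths lam) →
      ∃ δ > (0 : ℝ), ∀ p : Fin q → EuclideanSpace ℝ (Fin r),
        (∀ ℓ : Fin q, ‖p ℓ - pbar ℓ‖ < δ) →
        ∀ (w : W) (ℓ : Fin q),
          {σ : Paths w | ∀ τ : Paths w, ⟪p ℓ, lam w σ⟫ ≤ ⟪p ℓ, lam w τ⟫} =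
          {σ : Paths w | ∀ τ : Paths w, ⟪pbar ℓ, lam w σ⟫ ≤ ⟪pbar ℓ, lam w τ⟫} := by
  classical
  constructor
  · -- part (i)
    set U : (Σ w : W, Paths w × Paths w) → Set (EuclideanSpace ℝ (Fin r)) := fun i =>
      if i.2.1 ≠ i.2.2 then
        {p : EuclideanSpace ℝ (Fin r) |
          ⟪p, lam i.1 i.2.1 - lam i.1 i.2.2⟫ = 0 ∧ ∑ h, p h = 1}
      else ∅ with hU
    have hsub : nonUniqueSet r W Paths lam ⊆ ⋃ i, U i := by
      rintro p ⟨hps, w, π, π', hne, h1, h2⟩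
      refine Set.mem_iUnion.2 ⟨⟨w, (π, π')⟩, ?_⟩
      have hUeq : U ⟨w, (π, π')⟩ = {p : EuclideanSpace ℝ (Fin r) |
          ⟪p, lam w π - lam w π'⟫ = 0 ∧ ∑ h, p h = 1} := by
        rw [hU]; exact if_pos hne
      rw [hUeq]
      refine ⟨?_, hps.2⟩
      rw [inner_sub_right, le_antisymm (h1 π') (h2 π), sub_self]
    refine measure_mono_null hsub (measure_iUnion_null fun i => ?_)
    by_cases hne : i.2.1 ≠ i.2.2
    · have hUeq : U i = {p : EuclideanSpace ℝ (Fin r) |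
          ⟪p, lam i.1 i.2.1 - lam i.1 i.2.2⟫ = 0 ∧ ∑ h, p h = 1} := by
        rw [hU]; exact if_pos hne
      rw [hUeq]
      exact null_aux hr _ (sub_ne_zero_of_ne fun e => hne (hlam i.1 e))
    · have hUeq : U i = ∅ := by rw [hU]; exact if_neg hne
      rw [hUeq]; simp
  · -- part (ii)
    intro pbar hpbar
    have hmin : ∀ (w : W) (ℓ : Fin q), ∃ σ : Paths w,
        ∀ τ, ⟪pbar ℓ, lam w σ⟫ ≤ ⟪pbar ℓ, lam w τ⟫ :=
      fun w ℓ => Finite.exists_min _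
    choose σstar hσ using hmin
    have hstrict : ∀ (w : W) (ℓ : Fin q) (τ : Paths w), τ ≠ σstar w ℓ →
        ⟪pbar ℓ, lam w (σstar w ℓ)⟫ < ⟪pbar ℓ, lam w τ⟫ := by
      intro w ℓ τ hτ
      rcases (hσ w ℓ τ).lt_or_eq with h' | h'
      · exact h'
      · exact absurd ⟨(hpbar ℓ).1, w, σstar w ℓ, τ, Ne.symm hτ, hσ w ℓ,
          fun σ => h' ▸ hσ w ℓ σ⟩ (hpbar ℓ).2
    set V : Set (Fin q → EuclideanSpace ℝ (Fin r)) :=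
      {P | ∀ (w : W) (ℓ : Fin q) (τ : Paths w), τ ≠ σstar w ℓ →
        ⟪P ℓ, lam w (σstar w ℓ)⟫ < ⟪P ℓ, lam w τ⟫} with hV
    have hVopen : IsOpen V := by
      have : V = ⋂ (w : W), ⋂ (ℓ : Fin q), ⋂ (τ : Paths w), ⋂ (_ : τ ≠ σstar w ℓ),
          {P : Fin q → EuclideanSpace ℝ (Fin r) |
            ⟪P ℓ, lam w (σstar w ℓ)⟫ < ⟪P ℓ, lam w τ⟫} := by
        ext P; simp [hV]
      rw [this]
      refine isOpen_iInter_of_finite fun w => isOpen_iInter_of_finite fun ℓ =>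
        isOpen_iInter_of_finite fun τ => isOpen_iInter_of_finite fun _ => ?_
      exact isOpen_lt (Continuous.inner (continuous_apply ℓ) continuous_const)
        (Continuous.inner (continuous_apply ℓ) continuous_const)
    have hVmem : pbar ∈ V := fun w ℓ τ h => hstrict w ℓ τ h
    obtain ⟨δ, hδ, hball⟩ := Metric.isOpen_iff.1 hVopen pbar hVmem
    refine ⟨δ, hδ, fun p hp w ℓ => ?_⟩
    have hpV : p ∈ V := by
      apply hball
      rw [Metric.mem_ball, dist_pi_lt_iff hδ]
      intro ℓ'
      rw [dist_eq_norm]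
      exact hp ℓ'
    have hL : {σ : Paths w | ∀ τ : Paths w, ⟪p ℓ, lam w σ⟫ ≤ ⟪p ℓ, lam w τ⟫}
        = {σstar w ℓ} := by
      ext σ
      simp only [Set.mem_setOf_eq, Set.mem_singleton_iff]
      constructor
      · intro hmin
        by_contra hne
        exact absurd (hmin (σstar w ℓ)) (not_le.2 (hpV w ℓ σ hne))
      · rintro rfl τ
        rcases eq_or_ne τ (σstar w ℓ) with rfl | hne
        · exact le_refl _
        · exact (hpV w ℓ τ hne).le
    have hR : {σ : Paths w | ∀ τ : Paths w, ⟪pbar ℓ, lam w σ⟫ ≤ ⟪pbar ℓ, lam w τ⟫}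
        = {σstar w ℓ} := by
      ext σ
      simp only [Set.mem_setOf_eq, Set.mem_singleton_iff]
      constructor
      · intro hmin
        by_contra hne
        exact absurd (hmin (σstar w ℓ)) (not_le.2 (hstrict w ℓ σ hne))
      · rintro rfl τ
        exact hσ w ℓ τ
    rw [hL, hR]
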